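/- Let β_c = log 4. Fix α > 0, b ∈ {1, 0, −1}, and k ∈ ℝ with b·K'(β_c) − k < 0. Define β_n = β_c + b/n^α, K_n = K(β_c) + k/n^α, and g(b,k) = (40β_c(k − K'(β_c)·b)/27)^{1/4}. Suppose (m_n) is a sequence of positive real numbers such that m_n → 0 and, for all sufficiently large n, m_n is a critical point of G_{β_n,K_n}, i.e., G'_{β_n,K_n}(m_n) = 0. Then n^{α/4}·m_n → g(b,k) as n → ∞; i.e., m_n ∼ g(b,k)/n^{α/4}. -/

import Mathlib

open Real Filter

noncomputable def cgf (β t : ℝ) : ℝ :=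
  Real.log ((1 + Real.exp (-β) * (Real.exp t + Real.exp (-t))) / (1 + 2 * Real.exp (-β)))

noncomputable def freeEnergyG (β K x : ℝ) : ℝ := β * K * x ^ 2 - cgf β (2 * β * K * x)

noncomputable def Kcurve (β : ℝ) : ℝ := (Real.exp β + 2) / (4 * β)

noncomputable def c4coef (β : ℝ) : ℝ := (Real.exp β + 2) ^ 2 * (4 - Real.exp β) / (8 * 24)


lemma expTaylor6 (x : ℝ) (h : |x| ≤ 1) :
    |Real.exp x - (1 + x + x^2/2 + x^3/6 + x^4/24 + x^5/120)| ≤ |x|^6 * (7/4320) := by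
  have := Real.exp_bound h (n := 6) (by norm_num)
  simp [Finset.sum_range_succ] at this
  convert this using 2 <;> norm_num [Nat.factorial]

lemma sinhTaylor (x : ℝ) (h : |x| ≤ 1) :
    |Real.sinh x - (x + x^3/6 + x^5/120)| ≤ |x|^6 * (7/4320) := by
  have h1 := expTaylor6 x h
  have h2 := expTaylor6 (-x) (by rwa [abs_neg])
  rw [abs_neg] at h2
  rw [Real.sinh_eq]
  have key : (Real.exp x - Real.exp (-x))/2 - (x + x^3/6 + x^5/120)
      = ((Real.exp x - (1 + x + x^2/2 + x^3/6 + x^4/24 + x^5/120))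
        - (Real.exp (-x) - (1 + (-x) + (-x)^2/2 + (-x)^3/6 + (-x)^4/24 + (-x)^5/120)))/2 := by
    ring
  rw [key]
  calc _ ≤ (|Real.exp x - (1 + x + x^2/2 + x^3/6 + x^4/24 + x^5/120)|
        + |Real.exp (-x) - (1 + (-x) + (-x)^2/2 + (-x)^3/6 + (-x)^4/24 + (-x)^5/120)|)/2 := by
        rw [abs_div, abs_two]
        gcongr
        exact abs_sub _ _
    _ ≤ (|x|^6 * (7/4320) + |x|^6 * (7/4320))/2 := by gcongr
    _ = |x|^6 * (7/4320) := by ring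

lemma coshTaylor (x : ℝ) (h : |x| ≤ 1) :
    |Real.cosh x - (1 + x^2/2 + x^4/24)| ≤ |x|^6 * (7/4320) := by
  have h1 := expTaylor6 x h
  have h2 := expTaylor6 (-x) (by rwa [abs_neg])
  rw [abs_neg] at h2
  rw [Real.cosh_eq]
  have key : (Real.exp x + Real.exp (-x))/2 - (1 + x^2/2 + x^4/24)
      = ((Real.exp x - (1 + x + x^2/2 + x^3/6 + x^4/24 + x^5/120))
        + (Real.exp (-x) - (1 + (-x) + (-x)^2/2 + (-x)^3/6 + (-x)^4/24 + (-x)^5/120)))/2 := by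
    ring
  rw [key]
  calc _ ≤ (|Real.exp x - (1 + x + x^2/2 + x^3/6 + x^4/24 + x^5/120)|
        + |Real.exp (-x) - (1 + (-x) + (-x)^2/2 + (-x)^3/6 + (-x)^4/24 + (-x)^5/120)|)/2 := by
        rw [abs_div, abs_two]
        gcongr
        exact abs_add_le _ _
    _ ≤ (|x|^6 * (7/4320) + |x|^6 * (7/4320))/2 := by gcongr
    _ = |x|^6 * (7/4320) := by ring

lemma expTaylor2 (x : ℝ) (h : |x| ≤ 1) : |Real.exp x - (1 + x)| ≤ |x|^2 * (3/4) := by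
  have := Real.exp_bound h (n := 2) (by norm_num)
  simp [Finset.sum_range_succ] at this
  convert this using 2 <;> norm_num [Nat.factorial]

section helpers
variable (u : ℕ → ℝ)

lemma tendsto_to_zero_diff {f : ℕ → ℝ} {L : ℝ} (g : ℕ → ℝ)
    (hbound : ∀ᶠ n in atTop, |f n - L| ≤ g n) (hg : Tendsto g atTop (nhds 0)) :
    Tendsto f atTop (nhds L) := by
  have h0 : Tendsto (fun n => f n - L) atTop (nhds 0) :=
    squeeze_zero_norm' (by simpa using hbound) hg
  simpa using h0.add_const L

lemma eventually_abs_lt (hu : Tendsto u atTop (nhds 0)) {δ : ℝ} (hδ : 0 < δ) :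
    ∀ᶠ n in atTop, |u n| < δ := by
  have := hu.eventually (eventually_abs_sub_lt 0 hδ)
  simpa using this

lemma tendsto_sinh_ratio (hu : Tendsto u atTop (nhds 0)) (hne : ∀ᶠ n in atTop, u n ≠ 0) :
    Tendsto (fun n => (Real.sinh (u n) - u n - (u n)^3/6)/(u n)^5) atTop (nhds (1/120)) := by
  apply tendsto_to_zero_diff (fun n => |u n| * (7/4320))
  · filter_upwards [hne, eventually_abs_lt u hu one_pos] with n hn h1
    have hQ : (Real.sinh (u n) - u n - (u n)^3/6)/(u n)^5 - 1/120
        = (Real.sinh (u n) - (u n + (u n)^3/6 + (u n)^5/120))/(u n)^5 := by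
      field_simp; ring
    rw [hQ, abs_div]
    rw [div_le_iff₀ (by positivity)]
    calc |Real.sinh (u n) - (u n + (u n)^3/6 + (u n)^5/120)| ≤ |u n|^6 * (7/4320) :=
          sinhTaylor _ h1.le
      _ = |u n| * (7/4320) * |(u n)^5| := by rw [abs_pow]; ring
  · simpa using (hu.abs.mul_const (7/4320 : ℝ))

lemma tendsto_cosh_ratio (hu : Tendsto u atTop (nhds 0)) (hne : ∀ᶠ n in atTop, u n ≠ 0) :
    Tendsto (fun n => (Real.cosh (u n) - 1 - (u n)^2/2)/(u n)^4) atTop (nhds (1/24)) := by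
  apply tendsto_to_zero_diff (fun n => |u n|^2 * (7/4320))
  · filter_upwards [hne, eventually_abs_lt u hu one_pos] with n hn h1
    have hQ : (Real.cosh (u n) - 1 - (u n)^2/2)/(u n)^4 - 1/24
        = (Real.cosh (u n) - (1 + (u n)^2/2 + (u n)^4/24))/(u n)^4 := by
      field_simp; ring
    rw [hQ, abs_div]
    rw [div_le_iff₀ (by positivity)]
    calc |Real.cosh (u n) - (1 + (u n)^2/2 + (u n)^4/24)| ≤ |u n|^6 * (7/4320) :=
          coshTaylor _ h1.le
      _ = |u n|^2 * (7/4320) * |(u n)^4| := by rw [abs_pow]; ring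
  · have : Tendsto (fun n => |u n|^2) atTop (nhds 0) := by
      simpa using (hu.abs.pow 2)
    simpa using this.mul_const (7/4320 : ℝ)

lemma tendsto_exp_ratio (b : ℝ) (hu : Tendsto u atTop (nhds 0)) (hne : ∀ᶠ n in atTop, u n ≠ 0) :
    Tendsto (fun n => (Real.exp (b * u n) - 1)/(u n)) atTop (nhds b) := by
  apply tendsto_to_zero_diff (fun n => |u n| * (b^2 * (3/4)))
  · have hδ : (0:ℝ) < 1/(|b|+1) := by positivity
    filter_upwards [hne, eventually_abs_lt u hu hδ] with n hn h1
    have hb1 : |b * u n| ≤ 1 := by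
      rw [abs_mul]
      calc |b| * |u n| ≤ |b| * (1/(|b|+1)) :=
            mul_le_mul_of_nonneg_left h1.le (abs_nonneg b)
        _ ≤ 1 := by
            rw [mul_one_div, div_le_one (by positivity)]
            linarith [abs_nonneg b]
    have hQ : (Real.exp (b * u n) - 1)/(u n) - b
        = (Real.exp (b * u n) - (1 + b * u n))/(u n) := by
      field_simp; ring
    rw [hQ, abs_div, div_le_iff₀ (abs_pos.2 hn)]
    calc |Real.exp (b * u n) - (1 + b * u n)| ≤ |b * u n|^2 * (3/4) := expTaylor2 _ hb1
      _ = |u n| * (b^2 * (3/4)) * |u n| := by rw [abs_mul, mul_pow, sq_abs]; ring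
  · simpa using (hu.abs.mul_const (b^2 * (3/4) : ℝ))

lemma deriv_Kcurve_log4 :
    deriv Kcurve (Real.log 4) = (4 * Real.log 4 - 6) / (4 * (Real.log 4)^2) := by
  have hL : (0:ℝ) < Real.log 4 := Real.log_pos (by norm_num)
  have h1 : HasDerivAt Kcurve
      ((Real.exp (Real.log 4) * (4 * Real.log 4) - (Real.exp (Real.log 4) + 2) * 4)
        / (4 * Real.log 4)^2) (Real.log 4) := by
    have hc : HasDerivAt (fun β : ℝ => Real.exp β + 2) (Real.exp (Real.log 4)) (Real.log 4) :=
      (Real.hasDerivAt_exp _).add_const 2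
    have hd : HasDerivAt (fun β : ℝ => 4 * β) 4 (Real.log 4) := by
      simpa using (hasDerivAt_id (Real.log 4)).const_mul (4:ℝ)
    exact hc.div hd (by positivity)
  rw [h1.deriv, Real.exp_log (by norm_num : (0:ℝ) < 4)]
  field_simp
  ring

lemma cgf_hasDeriv (β t : ℝ) : HasDerivAt (cgf β)
    ((Real.exp (-β) * (Real.exp t - Real.exp (-t)))
      / (1 + Real.exp (-β) * (Real.exp t + Real.exp (-t)))) t := by
  have hN : HasDerivAt (fun s : ℝ => 1 + Real.exp (-β) * (Real.exp s + Real.exp (-s)))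
      (Real.exp (-β) * (Real.exp t - Real.exp (-t))) t := by
    have h1 : HasDerivAt (fun s : ℝ => Real.exp s + Real.exp (-s))
        (Real.exp t - Real.exp (-t)) t := by
      have a := Real.hasDerivAt_exp t
      have b : HasDerivAt (fun s : ℝ => Real.exp (-s)) (-Real.exp (-t)) t := by
        simpa [Function.comp_def] using (Real.hasDerivAt_exp (-t)).comp t (hasDerivAt_neg t)
      simpa [sub_eq_add_neg, Pi.add_def] using a.add b
    simpa [mul_sub] using (h1.const_mul (Real.exp (-β))).const_add 1
  have hD : (0:ℝ) < 1 + 2 * Real.exp (-β) := by positivity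
  have hNpos : (0:ℝ) < 1 + Real.exp (-β) * (Real.exp t + Real.exp (-t)) := by positivity
  have h2 := (hN.div_const (1 + 2 * Real.exp (-β))).log (by positivity)
  have heq : cgf β = fun s : ℝ =>
      Real.log ((1 + Real.exp (-β) * (Real.exp s + Real.exp (-s))) / (1 + 2 * Real.exp (-β))) :=
    rfl
  rw [heq]
  convert h2 using 1
  field_simp

lemma freeEnergy_deriv (β K x : ℝ) : deriv (freeEnergyG β K) x
    = 2*β*K*x - Real.exp (-β) * (Real.exp (2*β*K*x) - Real.exp (-(2*β*K*x)))
      / (1 + Real.exp (-β) * (Real.exp (2*β*K*x) + Real.exp (-(2*β*K*x)))) * (2*β*K) := by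
  have hin : HasDerivAt (fun y : ℝ => 2*β*K*y) (2*β*K) x := by
    simpa using (hasDerivAt_id x).const_mul (2*β*K)
  have h1 := (cgf_hasDeriv β (2*β*K*x)).comp x hin
  have h2 : HasDerivAt (fun y : ℝ => β*K*y^2) (β*K*(2*x)) x := by
    simpa using (hasDerivAt_pow 2 x).const_mul (β*K)
  have h3 : HasDerivAt (freeEnergyG β K)
      (β*K*(2*x) - Real.exp (-β) * (Real.exp (2*β*K*x) - Real.exp (-(2*β*K*x)))
        / (1 + Real.exp (-β) * (Real.exp (2*β*K*x) + Real.exp (-(2*β*K*x)))) * (2*β*K)) x := by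
    have : freeEnergyG β K = fun y : ℝ => β*K*y^2 - cgf β (2*β*K*y) := rfl
    rw [this]
    exact h2.sub h1
  rw [h3.deriv]
  ring

lemma perN (βc Kc b k E M C X S Ch Dn : ℝ) (hβc : βc ≠ 0) (hKc : Kc = 6/(4*βc)) (hE : E ≠ 0)
    (hM : M ≠ 0) (hCM : C*M ≠ 0) (hDne : Dn ≠ 0)
    (hC : C = 2*(βc + b*E)*(Kc + k*E))
    (hD : Dn = 2*C^4*((Ch - 1 - (C*M)^2/2)/(C*M)^4)
      - 2*C^5*((S - C*M - (C*M)^3/6)/(C*M)^5))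
    (hEq : M*(4*X + 2*Ch) = 2*S) :
    E⁻¹ * M^4 = ((4*(b*Kc + βc*k) + 4*b*k*E - 4*((X - 1)/E))
      + M^2 * (C^2*(2*(b*Kc + βc*k) + 2*b*k*E)/3))/Dn := by
  have hκv : (Ch - 1 - (C*M)^2/2)/(C*M)^4*(C*M)^4 = Ch - 1 - (C*M)^2/2 :=
    div_mul_cancel₀ _ (pow_ne_zero 4 hCM)
  have hσv : (S - C*M - (C*M)^3/6)/(C*M)^5*(C*M)^5 = S - C*M - (C*M)^3/6 :=
    div_mul_cancel₀ _ (pow_ne_zero 5 hCM)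
  have hDeq : M^4 * Dn = (2*C - 4*X - 2) + M^2*(C^3/3 - C^2) := by
    apply mul_left_cancel₀ hM
    calc M * (M^4 * Dn)
        = 2*M*((Ch - 1 - (C*M)^2/2)/(C*M)^4*(C*M)^4)
          - 2*((S - C*M - (C*M)^3/6)/(C*M)^5*(C*M)^5) := by rw [hD]; ring
      _ = 2*M*(Ch - 1 - (C*M)^2/2) - 2*(S - C*M - (C*M)^3/6) := by rw [hκv, hσv]
      _ = M * ((2*C - 4*X - 2) + M^2*(C^3/3 - C^2)) := by linear_combination hEq
  have hC3 : C - 3 = (2*(b*Kc + βc*k) + 2*b*k*E)*E := by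
    rw [hC, hKc]; field_simp; ring
  have hXE : (X - 1)/E*E = X - 1 := div_mul_cancel₀ _ hE
  have hee : E * E⁻¹ = 1 := mul_inv_cancel₀ hE
  rw [eq_div_iff hDne]
  apply mul_left_cancel₀ hE
  linear_combination (M^4 * Dn) * hee + hDeq - 4*hXE + 2*hC3 + (M^2*C^2/3)*hC3 + (8*X - 8)*hee

/-- exact asymptotics of positive critical points of
`G_{β_n,K_n}` for the sequence converging to the tricritical point:
`m_n ∼ g(b,k)/n^{α/4}`. -/
theorem stmt18 (α b k : ℝ) (hα : 0 < α) (hb : b = 1 ∨ b = 0 ∨ b = -1)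
    (hk : b * deriv Kcurve (Real.log 4) - k < 0)
    (m : ℕ → ℝ) (hmpos : ∀ n : ℕ, 0 < m n) (hm0 : Tendsto m atTop (nhds 0))
    (hcrit : ∀ᶠ n : ℕ in atTop,
      deriv (freeEnergyG (Real.log 4 + b / (n : ℝ) ^ α)
        (Kcurve (Real.log 4) + k / (n : ℝ) ^ α)) (m n) = 0) :
    Tendsto (fun n : ℕ => (n : ℝ) ^ (α / 4) * m n) atTop
      (nhds ((40 * Real.log 4 * (k - deriv Kcurve (Real.log 4) * b) / 27) ^ ((1 : ℝ) / 4))) := by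

  have hβcpos : (0:ℝ) < Real.log 4 := Real.log_pos (by norm_num)
  have hexpβc : Real.exp (Real.log 4) = 4 := Real.exp_log (by norm_num)
  set βc := Real.log 4 with hβcdef
  set K' := deriv Kcurve βc with hK'def
  have hK' : K' = (4*βc - 6)/(4*βc^2) := deriv_Kcurve_log4
  set Kc := Kcurve βc with hKcdef
  have hKc : Kc = 6/(4*βc) := by
    rw [hKcdef]; unfold Kcurve; rw [hexpβc]; norm_num
  set e : ℕ → ℝ := fun n => ((n:ℝ)^α)⁻¹ with hedef
  have hepos : ∀ᶠ n : ℕ in atTop, 0 < e n := by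
    filter_upwards [eventually_ge_atTop 1] with n hn
    have hn0 : (0:ℝ) < (n:ℝ) := by exact_mod_cast hn
    show (0:ℝ) < ((n:ℝ)^α)⁻¹
    positivity
  have hene : ∀ᶠ n : ℕ in atTop, e n ≠ 0 := hepos.mono (fun n h => h.ne')
  have he0 : Tendsto e atTop (nhds 0) := by
    apply Filter.Tendsto.inv_tendsto_atTop
    exact (tendsto_rpow_atTop hα).comp tendsto_natCast_atTop_atTop
  set c : ℕ → ℝ := fun n => 2*(βc + b * e n)*(Kc + k * e n) with hcdef
  have hc3 : Tendsto c atTop (nhds 3) := by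
    have hcont : Continuous (fun x : ℝ => 2*(βc + b*x)*(Kc + k*x)) := by continuity
    have h := (hcont.tendsto 0).comp he0
    have hval : 2*(βc + b*0)*(Kc + k*0) = 3 := by
      rw [hKc]; field_simp; ring
    rw [hval] at h
    exact h
  have hcpos : ∀ᶠ n : ℕ in atTop, 0 < c n :=
    hc3.eventually (eventually_gt_nhds (by norm_num))
  have ht0 : Tendsto (fun n => c n * m n) atTop (nhds 0) := by
    simpa using hc3.mul hm0
  have htne : ∀ᶠ n : ℕ in atTop, c n * m n ≠ 0 := by
    filter_upwards [hcpos] with n h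
    exact (mul_pos h (hmpos n)).ne'
  have hEq1 : ∀ᶠ n : ℕ in atTop,
      m n * (Real.exp (βc + b * e n) + 2*Real.cosh (c n * m n)) = 2*Real.sinh (c n * m n) := by
    simp only [div_eq_mul_inv] at hcrit
    filter_upwards [hcrit, hcpos] with n hcr0 hcp
    have hcr' : deriv (freeEnergyG (βc + b * e n) (Kc + k * e n)) (m n) = 0 := hcr0
    rw [freeEnergy_deriv] at hcr'
    set β := βc + b * e n with hβ
    set K := Kc + k * e n with hK
    have hcn : c n = 2*β*K := by show 2*(βc + b * e n)*(Kc + k * e n) = 2*β*K; rw [← hβ, ← hK]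
    rw [← hcn] at hcr'
    set T := c n * m n with hT
    set N := 1 + Real.exp (-β) * (Real.exp T + Real.exp (-T)) with hN
    have hNpos : 0 < N := by rw [hN]; positivity
    have h4 : (m n - Real.exp (-β) * (Real.exp T - Real.exp (-T)) / N) * c n = 0 := by
      linear_combination hcr'
    have h3 : m n = Real.exp (-β) * (Real.exp T - Real.exp (-T)) / N := by
      rcases mul_eq_zero.1 h4 with h | h
      · linarith [sub_eq_zero.1 h]
      · exact absurd h hcp.ne'
    have h5 : m n * N = Real.exp (-β) * (Real.exp T - Real.exp (-T)) :=
      (eq_div_iff hNpos.ne').1 h3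
    rw [hN, Real.exp_neg β] at h5
    have hEβ : Real.exp β ≠ 0 := Real.exp_ne_zero β
    rw [Real.cosh_eq, Real.sinh_eq]
    field_simp at h5 ⊢
    linear_combination h5
  set D : ℕ → ℝ := fun n =>
      2*(c n)^4*((Real.cosh (c n*m n) - 1 - (c n*m n)^2/2)/(c n*m n)^4)
      - 2*(c n)^5*((Real.sinh (c n*m n) - (c n*m n) - (c n*m n)^3/6)/(c n*m n)^5) with hDdef
  have hσ := tendsto_sinh_ratio (fun n => c n * m n) ht0 htne
  have hκ := tendsto_cosh_ratio (fun n => c n * m n) ht0 htne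
  have hXr := tendsto_exp_ratio e b he0 hene
  have hDlim : Tendsto D atTop (nhds (27/10)) := by
    have h := (((hc3.pow 4).const_mul 2).mul hκ).sub (((hc3.pow 5).const_mul 2).mul hσ)
    have hval : (27/10 : ℝ) = 2*3^4*(1/24) - 2*3^5*(1/120) := by norm_num
    rw [hval]
    exact h
  have hDne : ∀ᶠ n : ℕ in atTop, D n ≠ 0 := hDlim.eventually_ne (by norm_num)
  have hEq3 : ∀ᶠ n : ℕ in atTop, (n:ℝ)^α * m n^4
      = ((4*(b*Kc + βc*k) + 4*b*k*(e n) - 4*((Real.exp (b*e n) - 1)/(e n)))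
        + m n^2 * ((c n)^2*(2*(b*Kc + βc*k) + 2*b*k*(e n))/3))/(D n) := by
    filter_upwards [hEq1, hene, hDne, htne] with n h1 hen hDn htn
    have hpow : ((n:ℝ)^α) = (e n)⁻¹ := (inv_inv _).symm
    rw [hpow]
    have hsplit : Real.exp (βc + b*e n) = 4*Real.exp (b*e n) := by
      rw [Real.exp_add, hexpβc]
    rw [hsplit] at h1
    exact perN βc Kc b k (e n) (m n) (c n) (Real.exp (b*e n)) (Real.sinh (c n*m n))
      (Real.cosh (c n*m n)) (D n) hβcpos.ne' hKc hen (hmpos n).ne' htn hDn rfl rfl h1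
  have hAe : Tendsto (fun n => 4*(b*Kc + βc*k) + 4*b*k*(e n)
      - 4*((Real.exp (b*e n) - 1)/(e n))) atTop (nhds (4*(b*Kc + βc*k) - 4*b)) := by
    have h := ((tendsto_const_nhds (x := 4*(b*Kc + βc*k)) (f := atTop)).add
      (he0.const_mul (4*b*k))).sub (hXr.const_mul 4)
    simpa using h
  have hBq : Tendsto (fun n => (c n)^2*(2*(b*Kc + βc*k) + 2*b*k*(e n))/3) atTop
      (nhds (3^2*(2*(b*Kc + βc*k) + 2*b*k*0)/3)) := by
    exact ((hc3.pow 2).mul (tendsto_const_nhds.add (he0.const_mul (2*b*k)))).div_const 3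
  have hm2 : Tendsto (fun n => m n^2) atTop (nhds 0) := by
    simpa using hm0.pow 2
  have hRHS := (hAe.add (hm2.mul hBq)).div hDlim (by norm_num : (27/10:ℝ) ≠ 0)
  have hLval : (4*(b*Kc + βc*k) - 4*b + 0*(3^2*(2*(b*Kc + βc*k) + 2*b*k*0)/3))/(27/10 : ℝ)
      = 40*βc*(k - K'*b)/27 := by
    rw [hKc, hK']; field_simp; ring
  rw [hLval] at hRHS
  have htot : Tendsto (fun n : ℕ => (n:ℝ)^α * m n^4) atTop (nhds (40*βc*(k - K'*b)/27)) :=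
    Tendsto.congr' (hEq3.mono fun n h => h.symm) hRHS
  have hLpos : 0 < 40*βc*(k - K'*b)/27 := by
    have h1 : K'*b = b*K' := mul_comm _ _
    have h2 : 0 < k - K'*b := by linarith
    apply div_pos (mul_pos (by positivity) h2) (by norm_num)
  have hfin : ∀ᶠ n : ℕ in atTop, ((n:ℝ)^α * m n^4)^((1:ℝ)/4) = (n:ℝ)^(α/4) * m n := by
    filter_upwards [eventually_ge_atTop 1] with n hn
    have hn0 : (0:ℝ) ≤ (n:ℝ) := n.cast_nonneg
    have hnpos : (0:ℝ) < (n:ℝ) := by exact_mod_cast hn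
    have hm' : (0:ℝ) ≤ m n := (hmpos n).le
    have hnp : (0:ℝ) ≤ (n:ℝ)^α := (Real.rpow_pos_of_pos hnpos α).le
    rw [Real.mul_rpow hnp (by positivity)]
    congr 1
    · rw [← Real.rpow_mul hn0]
      congr 1
      ring
    · rw [← Real.rpow_natCast (m n) 4, ← Real.rpow_mul hm']
      norm_num
  have hfinal := htot.rpow_const (p := (1:ℝ)/4) (Or.inr (by norm_num))
  exact Tendsto.congr' hfin hfinal
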